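/- Let G be a simple graph on a finite vertex set V, let k : V → ℕ with k(x) ≥ 1 for all x ∈ V, and let 𝟙 denote the constant function 1 on V. Let w ∈ V be a pendant vertex of G (a vertex of degree exactly 1) with unique neighbor v, and let g be a (k,𝟙)-packing function of G. Then there exists a (k,𝟙)-packing function g' of G such that g'(V) ≥ g(V), g'(w) = 1, and g'(x) = g(x) for every x ∉ N[v]. -/
import Mathlib


open Classical Finset

/-- The closed neighborhood `N[v]` of `v` in `G`, as a finset. -/
noncomputable def closedNbhd {V : Type*} [Fintype V] (G : SimpleGraph V) (v : V) : Finset V :=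
  Finset.univ.filter (fun w => G.Adj v w ∨ w = v)

lemma mem_closedNbhd_self {V : Type*} [Fintype V] (G : SimpleGraph V) (v : V) :
    v ∈ closedNbhd G v := by simp [closedNbhd]

/-- `f` is a `(k,u)`-dominating function of `G`. -/
def IsDomFn {V : Type*} [Fintype V] (G : SimpleGraph V) (k u f : V → ℕ) : Prop :=
  ∀ v, f v ≤ u v ∧ k v ≤ ∑ w ∈ closedNbhd G v, f w

/-- `f` is a `(k,u)`-packing function of `G`. -/
def IsPackFn {V : Type*} [Fintype V] (G : SimpleGraph V) (k u f : V → ℕ) : Prop :=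
  ∀ v, f v ≤ u v ∧ ∑ w ∈ closedNbhd G v, f w ≤ k v

/-- `γ_{k,u}(G)`: minimum weight of a `(k,u)`-dominating function. -/
noncomputable def gammaKU {V : Type*} [Fintype V] (G : SimpleGraph V) (k u : V → ℕ) : ℕ :=
  sInf {s | ∃ f, IsDomFn G k u f ∧ s = ∑ v, f v}

/-- `L_{k,u}(G)`: maximum weight of a `(k,u)`-packing function. -/
noncomputable def LKU {V : Type*} [Fintype V] (G : SimpleGraph V) (k u : V → ℕ) : ℕ :=
  sSup {s | ∃ f, IsPackFn G k u f ∧ s = ∑ v, f v}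

/-- Split off two distinct elements from a sum. -/
lemma sum_split_two {V : Type*} [DecidableEq V] (s : Finset V) (f : V → ℕ) {a b : V}
    (ha : a ∈ s) (hb : b ∈ s) (hab : a ≠ b) :
    ∑ y ∈ s, f y = f a + f b + ∑ y ∈ (s.erase a).erase b, f y := by
  rw [← Finset.add_sum_erase _ f ha,
      ← Finset.add_sum_erase _ f (Finset.mem_erase.2 ⟨hab.symm, hb⟩), add_assoc]

/-- if `k ≥ 1` everywhere, `w` is a pendant vertex with unique neighbor
`v`, and `g` is a `(k,𝟙)`-packing function, then there is a `(k,𝟙)`-packing function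
`g'` with `g'(V) ≥ g(V)`, `g'(w) = 1`, and `g' = g` outside `N[v]`. -/
theorem stmt_10 {V : Type*} [Fintype V] (G : SimpleGraph V) (k : V → ℕ)
    (hk : ∀ x, 1 ≤ k x) (w v : V) (hadj : G.Adj v w)
    (hpend : ∀ x, G.Adj w x → x = v)
    (g : V → ℕ) (hg : IsPackFn G k (fun _ => 1) g) :
    ∃ g' : V → ℕ, IsPackFn G k (fun _ => 1) g' ∧
      (∑ x, g x) ≤ (∑ x, g' x) ∧ g' w = 1 ∧
      ∀ x, x ∉ closedNbhd G v → g' x = g x := by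
  classical
  have hvw : v ≠ w := hadj.ne
  have hmem : ∀ x y : V, y ∈ closedNbhd G x ↔ G.Adj x y ∨ y = x := by
    intro x y; simp [closedNbhd]
  have hw_in : ∀ x : V, w ∈ closedNbhd G x → x = w ∨ x = v := by
    intro x hx
    rw [hmem] at hx
    rcases hx with h | h
    · exact Or.inr (hpend x h.symm)
    · exact Or.inl h.symm
  have hw_mem_Nv : w ∈ closedNbhd G v := (hmem v w).2 (Or.inl hadj)
  have hv_mem_Nv : v ∈ closedNbhd G v := mem_closedNbhd_self G v
  have hNw : closedNbhd G w = {w, v} := by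
    ext x
    rw [hmem, Finset.mem_insert, Finset.mem_singleton]
    constructor
    · rintro (h | h)
      · exact Or.inr (hpend x h)
      · exact Or.inl h
    · rintro (rfl | rfl)
      · exact Or.inr rfl
      · exact Or.inl hadj.symm
  by_cases hgw1 : g w = 1
  · exact ⟨g, hg, le_refl _, hgw1, fun _ _ => rfl⟩
  have hgw0 : g w = 0 := by have h1 : g w ≤ 1 := (hg w).1; omega
  by_cases hgv1 : g v = 1
  · -- swap the values at w and v
    set g' : V → ℕ := fun x => if x = w then 1 else if x = v then 0 else g x with hg'def
    have hg'w : g' w = 1 := by simp [hg'def]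
    have hg'v : g' v = 0 := by simp [hg'def, hvw, hvw.symm]
    have key : ∀ s : Finset V, w ∈ s → v ∈ s → ∑ y ∈ s, g' y = ∑ y ∈ s, g y := by
      intro s hws hvs
      rw [sum_split_two s g' hws hvs hvw.symm, sum_split_two s g hws hvs hvw.symm]
      have hrest : ∑ y ∈ (s.erase w).erase v, g' y = ∑ y ∈ (s.erase w).erase v, g y := by
        refine Finset.sum_congr rfl fun y hy => ?_
        rw [Finset.mem_erase, Finset.mem_erase] at hy
        simp [hg'def, hy.2.1, hy.1]
      rw [hrest, hg'w, hg'v, hgw0, hgv1]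
    refine ⟨g', ?_, ?_, hg'w, ?_⟩
    · intro x
      constructor
      · have h1 : g x ≤ 1 := (hg x).1
        simp only [hg'def]
        split_ifs <;> omega
      · by_cases hxw : w ∈ closedNbhd G x
        · rcases hw_in x hxw with h | h
          · rw [h, hNw, Finset.sum_pair hvw.symm, hg'w, hg'v]
            exact hk w
          · rw [h, key _ hw_mem_Nv hv_mem_Nv]
            exact (hg v).2
        · refine le_trans (Finset.sum_le_sum fun y hy => ?_) (hg x).2
          have hyw : y ≠ w := fun h => hxw (h ▸ hy)
          simp only [hg'def, if_neg hyw]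
          split_ifs <;> omega
    · exact le_of_eq (key Finset.univ (Finset.mem_univ _) (Finset.mem_univ _)).symm
    · intro x hx
      have hxw : x ≠ w := fun h => hx (h ▸ hw_mem_Nv)
      have hxv : x ≠ v := fun h => hx (h ▸ hv_mem_Nv)
      simp [hg'def, hxw, hxv]
  have hgv0 : g v = 0 := by have h1 : g v ≤ 1 := (hg v).1; omega
  by_cases htight : ∑ y ∈ closedNbhd G v, g y = k v
  · -- move one unit from some z in N[v] to w
    have hpos : 0 < ∑ y ∈ closedNbhd G v, g y := by rw [htight]; exact hk v
    obtain ⟨z, hz_mem, hz_pos⟩ : ∃ z ∈ closedNbhd G v, 0 < g z := by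
      by_contra h
      push_neg at h
      have : ∑ y ∈ closedNbhd G v, g y = 0 :=
        Finset.sum_eq_zero fun y hy => Nat.le_zero.1 (h y hy)
      omega
    have hgz1 : g z = 1 := by have h1 : g z ≤ 1 := (hg z).1; omega
    have hzw : z ≠ w := fun h => by rw [h, hgw0] at hz_pos; omega
    have hzv : z ≠ v := fun h => by rw [h, hgv0] at hz_pos; omega
    set g' : V → ℕ := fun x => if x = w then 1 else if x = z then 0 else g x with hg'def
    have hg'w : g' w = 1 := by simp [hg'def]
    have hg'z : g' z = 0 := by simp [hg'def, hzw]
    have hg'v : g' v = 0 := by simp [hg'def, hvw, hzv.symm, hgv0]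
    have key : ∀ s : Finset V, w ∈ s → z ∈ s → ∑ y ∈ s, g' y = ∑ y ∈ s, g y := by
      intro s hws hzs
      rw [sum_split_two s g' hws hzs hzw.symm, sum_split_two s g hws hzs hzw.symm]
      have hrest : ∑ y ∈ (s.erase w).erase z, g' y = ∑ y ∈ (s.erase w).erase z, g y := by
        refine Finset.sum_congr rfl fun y hy => ?_
        rw [Finset.mem_erase, Finset.mem_erase] at hy
        simp [hg'def, hy.2.1, hy.1]
      rw [hrest, hg'w, hg'z, hgw0, hgz1]
    refine ⟨g', ?_, ?_, hg'w, ?_⟩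
    · intro x
      constructor
      · have h1 : g x ≤ 1 := (hg x).1
        simp only [hg'def]
        split_ifs <;> omega
      · by_cases hxw : w ∈ closedNbhd G x
        · rcases hw_in x hxw with h | h
          · rw [h, hNw, Finset.sum_pair hvw.symm, hg'w, hg'v]
            exact hk w
          · rw [h, key _ hw_mem_Nv hz_mem]
            exact (hg v).2
        · refine le_trans (Finset.sum_le_sum fun y hy => ?_) (hg x).2
          have hyw : y ≠ w := fun h => hxw (h ▸ hy)
          simp only [hg'def, if_neg hyw]
          split_ifs <;> omega
    · exact le_of_eq (key Finset.univ (Finset.mem_univ _) (Finset.mem_univ _)).symm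
    · intro x hx
      have hxw : x ≠ w := fun h => hx (h ▸ hw_mem_Nv)
      have hxz : x ≠ z := fun h => hx (h ▸ hz_mem)
      simp [hg'def, hxw, hxz]
  · -- just raise the value at w to 1
    have hlt : ∑ y ∈ closedNbhd G v, g y < k v := lt_of_le_of_ne (hg v).2 htight
    set g' : V → ℕ := fun x => if x = w then 1 else g x with hg'def
    have hg'w : g' w = 1 := by simp [hg'def]
    have hg'v : g' v = 0 := by simp [hg'def, hvw, hgv0]
    have key : ∀ s : Finset V, w ∈ s → ∑ y ∈ s, g' y = ∑ y ∈ s, g y + 1 := by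
      intro s hws
      rw [← Finset.add_sum_erase _ g' hws, ← Finset.add_sum_erase _ g hws]
      have hrest : ∑ y ∈ s.erase w, g' y = ∑ y ∈ s.erase w, g y := by
        refine Finset.sum_congr rfl fun y hy => ?_
        rw [Finset.mem_erase] at hy
        simp [hg'def, hy.1]
      rw [hrest, hg'w, hgw0]
      omega
    refine ⟨g', ?_, ?_, hg'w, ?_⟩
    · intro x
      constructor
      · have h1 : g x ≤ 1 := (hg x).1
        simp only [hg'def]
        split_ifs <;> omega
      · by_cases hxw : w ∈ closedNbhd G x
        · rcases hw_in x hxw with h | h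
          · rw [h, hNw, Finset.sum_pair hvw.symm, hg'w, hg'v]
            exact hk w
          · rw [h, key _ hw_mem_Nv]
            omega
        · refine le_of_le_of_eq ?_ rfl |>.trans (hg x).2
          refine le_of_eq (Finset.sum_congr rfl fun y hy => ?_)
          have hyw : y ≠ w := fun h => hxw (h ▸ hy)
          simp [hg'def, hyw]
    · rw [key Finset.univ (Finset.mem_univ _)]
      omega
    · intro x hx
      have hxw : x ≠ w := fun h => hx (h ▸ hw_mem_Nv)
      simp [hg'def, hxw]
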